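/- Let X be a real Banach space such that there exists E ∈ B(X, X*) symmetric with the property that for every symmetric R ∈ B(X,X*) there exists t > 0 with ⟨(tE − R)x, x⟩ ≥ 0 for all x. Then ⟨Ex,x⟩ ≥ a‖x‖² for some a > 0 and hence x ↦ ⟨Ex,x⟩^{1/2} is an equivalent norm making X isomorphic to a Hilbert space (i.e., the norm ⟨Ex,x⟩^{1/2} satisfies the parallelogram law and is equivalent to ‖·‖). -/

import Mathlib

set_option maxHeartbeats 1000000 in
set_option synthInstance.maxHeartbeats 1000000 in
/-- If `X` carries a bounded symmetric `E : X → X*` such that for every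
bounded symmetric `R` some positive multiple `tE` dominates `R` in the quadratic-form
order, then `⟨Ex,x⟩ ≥ a‖x‖²` for some `a > 0`; hence `x ↦ ⟨Ex,x⟩^{1/2}` is an equivalent
norm satisfying the parallelogram law, so `X` is isomorphic to a Hilbert space. -/
theorem hilbertizable_of_dominating_operator
    {X : Type*} [NormedAddCommGroup X] [NormedSpace ℝ X] [CompleteSpace X]
    (E : X →L[ℝ] X →L[ℝ] ℝ) (hEsym : ∀ x y : X, E x y = E y x)
    (hdom : ∀ R : X →L[ℝ] X →L[ℝ] ℝ, (∀ x y : X, R x y = R y x) →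
      ∃ t : ℝ, 0 < t ∧ ∀ x : X, 0 ≤ (t • E - R) x x) :
    ∃ a : ℝ, 0 < a ∧
      (∀ x : X, a * ‖x‖ ^ 2 ≤ E x x) ∧
      (∀ x : X, E x x ≤ ‖E‖ * ‖x‖ ^ 2) ∧
      (∀ x y : X,
        Real.sqrt (E (x + y) (x + y)) ^ 2 + Real.sqrt (E (x - y) (x - y)) ^ 2 =
          2 * Real.sqrt (E x x) ^ 2 + 2 * Real.sqrt (E y y) ^ 2) := by
  -- nonnegativity of the quadratic form
  have hnn : ∀ x : X, 0 ≤ E x x := by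
    obtain ⟨t, ht, h⟩ := hdom 0 (by simp)
    intro x
    have h1 := h x
    simp [ContinuousLinearMap.sub_apply, ContinuousLinearMap.smul_apply] at h1
    nlinarith
  have key : ∃ a : ℝ, 0 < a ∧ ∀ x : X, a * ‖x‖ ^ 2 ≤ E x x := by
    by_contra hcon
    push_neg at hcon
    have hx : ∀ n : ℕ, ∃ x : X, E x x < (4⁻¹ : ℝ) ^ n * ‖x‖ ^ 2 := by
      intro n
      obtain ⟨x, hx⟩ := hcon ((4⁻¹ : ℝ) ^ n) (by positivity)
      exact ⟨x, hx⟩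
    choose x hxlt using hx
    have hxne : ∀ n, x n ≠ 0 := by
      intro n h0
      have := hxlt n
      rw [h0] at this
      simp at this
    set u : ℕ → X := fun n => ‖x n‖⁻¹ • x n with hu
    have hnu : ∀ n, ‖u n‖ = 1 := fun n => norm_smul_inv_norm (hxne n)
    have hEu : ∀ n, E (u n) (u n) < (4⁻¹ : ℝ) ^ n := by
      intro n
      have hxn : (0:ℝ) < ‖x n‖ := norm_pos_iff.2 (hxne n)
      have : E (u n) (u n) = ‖x n‖⁻¹ ^ 2 * E (x n) (x n) := by
        simp [hu, map_smul, ContinuousLinearMap.smul_apply, smul_eq_mul]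
        ring
      rw [this]
      have h2 := hxlt n
      have : ‖x n‖⁻¹ ^ 2 * E (x n) (x n) < ‖x n‖⁻¹ ^ 2 * ((4⁻¹:ℝ) ^ n * ‖x n‖ ^ 2) := by
        apply mul_lt_mul_of_pos_left h2 (by positivity)
      calc ‖x n‖⁻¹ ^ 2 * E (x n) (x n) < ‖x n‖⁻¹ ^ 2 * ((4⁻¹:ℝ) ^ n * ‖x n‖ ^ 2) := this
        _ = (4⁻¹:ℝ) ^ n := by field_simp
    have hune : ∀ n, u n ≠ 0 := fun n h0 => by
      have := hnu n; rw [h0] at this; simp at this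
    choose φ hφ1 hφu using fun n => exists_dual_vector ℝ (u n) (norm_ne_zero_iff.mpr (hune n))
    have hφu1 : ∀ n, φ n (u n) = 1 := by
      intro n; rw [hφu n, hnu n]; norm_num
    -- the rank-one operators
    set f : ℕ → (X →L[ℝ] X →L[ℝ] ℝ) :=
      fun n => (2⁻¹ : ℝ) ^ n • (φ n).smulRight (φ n) with hf
    have hfnorm : ∀ n, ‖f n‖ ≤ (2⁻¹ : ℝ) ^ n := by
      intro n
      have h1 : ‖f n‖ ≤ ‖(2⁻¹ : ℝ) ^ n‖ * ‖(φ n).smulRight (φ n)‖ := by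
        rw [hf]
        exact ContinuousLinearMap.opNorm_smul_le ((2⁻¹:ℝ)^n) ((φ n).smulRight (φ n))
      rw [ContinuousLinearMap.norm_smulRight_apply, hφ1,
        Real.norm_eq_abs, abs_of_nonneg (by positivity : (0:ℝ) ≤ (2⁻¹:ℝ)^n)] at h1
      linarith
    have hsum : Summable f :=
      Summable.of_norm_bounded (E := X →L[ℝ] X →L[ℝ] ℝ) (g := fun n => (2⁻¹:ℝ)^n)
        (summable_geometric_of_lt_one (by norm_num) (by norm_num)) hfnorm
    set R : X →L[ℝ] X →L[ℝ] ℝ := ∑' n, f n with hRdef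
    have happly : ∀ z w : X, R z w = ∑' n, (2⁻¹:ℝ) ^ n * (φ n z * φ n w) := by
      intro z w
      have h1 : R z = ∑' n, f n z :=
        (ContinuousLinearMap.apply ℝ (X →L[ℝ] ℝ) z).map_tsum hsum
      have hsum2 : Summable (fun n => f n z) :=
        hsum.map (ContinuousLinearMap.apply ℝ (X →L[ℝ] ℝ) z).toLinearMap.toAddMonoidHom
          (ContinuousLinearMap.apply ℝ (X →L[ℝ] ℝ) z).continuous
      have h2 : R z w = ∑' n, f n z w := by
        rw [h1]
        exact (ContinuousLinearMap.apply ℝ ℝ w).map_tsum hsum2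
      rw [h2]
      apply tsum_congr
      intro n
      simp [hf, ContinuousLinearMap.smul_apply, ContinuousLinearMap.smulRight_apply,
        smul_eq_mul, mul_comm]
    clear hRdef
    clear_value R
    have hRsym : ∀ z w : X, R z w = R w z := by
      intro z w
      rw [happly, happly]
      exact tsum_congr fun n => by ring
    obtain ⟨t, ht, hdomR⟩ := hdom R hRsym
    -- R (u m) (u m) ≥ (2⁻¹)^m
    have hRlow : ∀ m, (2⁻¹:ℝ) ^ m ≤ R (u m) (u m) := by
      intro m
      rw [happly]
      have hsumr : Summable (fun n => (2⁻¹:ℝ) ^ n * (φ n (u m) * φ n (u m))) := by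
        apply Summable.of_norm_bounded
          (summable_geometric_of_lt_one (by norm_num) (by norm_num : (2⁻¹:ℝ) < 1))
        intro n
        have hb : |φ n (u m)| ≤ 1 := by
          have := (φ n).le_opNorm (u m)
          rw [hφ1 n, hnu m] at this
          simpa [Real.norm_eq_abs] using this
        have : ‖(2⁻¹:ℝ) ^ n * (φ n (u m) * φ n (u m))‖
            = (2⁻¹:ℝ) ^ n * (φ n (u m))^2 := by
          rw [Real.norm_eq_abs, abs_mul, abs_of_nonneg (by positivity : (0:ℝ) ≤ (2⁻¹:ℝ)^n),
            abs_mul_self]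
          ring
        rw [this]
        have : (φ n (u m))^2 ≤ 1 := by nlinarith [abs_nonneg (φ n (u m)), sq_abs (φ n (u m))]
        nlinarith [pow_pos (by norm_num : (0:ℝ) < 2⁻¹) n]
      have := Summable.le_tsum hsumr m (fun i _ => mul_nonneg (by positivity) (mul_self_nonneg _))
      calc (2⁻¹:ℝ) ^ m = (2⁻¹:ℝ) ^ m * (φ m (u m) * φ m (u m)) := by
            rw [hφu1 m]; ring
        _ ≤ _ := this
    -- contradiction
    obtain ⟨n, hn⟩ := pow_unbounded_of_one_lt t (by norm_num : (1:ℝ) < 2)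
    have h1 := hdomR (u n)
    simp only [ContinuousLinearMap.sub_apply, ContinuousLinearMap.smul_apply,
      smul_eq_mul] at h1
    have h2 : R (u n) (u n) ≤ t * E (u n) (u n) := by linarith
    have h3 : (2⁻¹:ℝ) ^ n ≤ t * E (u n) (u n) := le_trans (hRlow n) h2
    have h4 : t * E (u n) (u n) < t * (4⁻¹:ℝ) ^ n :=
      mul_lt_mul_of_pos_left (hEu n) ht
    have h5 : (2⁻¹:ℝ) ^ n < t * (4⁻¹:ℝ) ^ n := lt_of_le_of_lt h3 h4
    have h6 : ((4:ℝ)⁻¹) ^ n = (2⁻¹:ℝ)^n * (2⁻¹:ℝ)^n := by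
      rw [← mul_pow]; norm_num
    have hp : (0:ℝ) < (2⁻¹:ℝ)^n := by positivity
    have h7 : (1:ℝ) < t * (2⁻¹:ℝ)^n := by
      rw [h6] at h5
      nlinarith
    have h8 : (2:ℝ)^n < t := by
      have : (2:ℝ)^n * (2⁻¹:ℝ)^n = 1 := by
        rw [← mul_pow]; norm_num
      nlinarith
    linarith
  obtain ⟨a, ha, hlow⟩ := key
  refine ⟨a, ha, hlow, ?_, ?_⟩
  · intro x
    have h1 : E x x ≤ |E x x| := le_abs_self _
    have h2 : ‖E x x‖ ≤ ‖E x‖ * ‖x‖ := (E x).le_opNorm x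
    have h3 : ‖E x‖ ≤ ‖E‖ * ‖x‖ := E.le_opNorm x
    have h4 : ‖E x‖ * ‖x‖ ≤ ‖E‖ * ‖x‖ * ‖x‖ :=
      mul_le_mul_of_nonneg_right h3 (norm_nonneg x)
    rw [Real.norm_eq_abs] at h2
    calc E x x ≤ |E x x| := h1
      _ ≤ ‖E‖ * ‖x‖ * ‖x‖ := le_trans h2 h4
      _ = ‖E‖ * ‖x‖ ^ 2 := by ring
  · intro x y
    rw [Real.sq_sqrt (hnn _), Real.sq_sqrt (hnn _), Real.sq_sqrt (hnn _),
      Real.sq_sqrt (hnn _)]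
    simp only [map_add, map_sub, ContinuousLinearMap.add_apply,
      ContinuousLinearMap.sub_apply]
    ring
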